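/- Let F : D → ℝⁿ be a vector field and T₀, T₁, V₁ : D → ℝ smooth functions on an open set D ⊆ ℝⁿ, and let A = G·Gᵀ be a symmetric matrix field. Assume (i) F·∇T₀ = −1, (ii) F·∇T₁ = −(1/2) Σ_{ij} A_{ij} ∂²_{ij} T₀, and (iii) F·∇(V₁ + 2T₀T₁) + (1/2) Σ_{ij} A_{ij} ∂²_{ij}(T₀²) = −2T₁. Then F·∇V₁ = −Σ_{ij} A_{ij} ∂_i T₀ ∂_j T₀. -/

import Mathlib

open Matrix

/-- The `i`-th partial derivative of `f : (Fin n → ℝ) → ℝ`. -/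
noncomputable def pd {n : ℕ} (i : Fin n) (f : (Fin n → ℝ) → ℝ) (x : Fin n → ℝ) : ℝ :=
  fderiv ℝ f x (Pi.single i 1)

/-- Directional derivative of `φ` along the vector field `F`, i.e. `F·∇φ`. -/
noncomputable def gradDot {n : ℕ} (F : (Fin n → ℝ) → Fin n → ℝ)
    (φ : (Fin n → ℝ) → ℝ) (x : Fin n → ℝ) : ℝ :=
  ∑ i, F x i * pd i φ x

lemma pd_add {n : ℕ} {f g : (Fin n → ℝ) → ℝ} {x : Fin n → ℝ} (i : Fin n)
    (hf : DifferentiableAt ℝ f x) (hg : DifferentiableAt ℝ g x) :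
    pd i (fun y => f y + g y) x = pd i f x + pd i g x := by
  simp [pd, fderiv_fun_add hf hg]

lemma pd_mul {n : ℕ} {f g : (Fin n → ℝ) → ℝ} {x : Fin n → ℝ} (i : Fin n)
    (hf : DifferentiableAt ℝ f x) (hg : DifferentiableAt ℝ g x) :
    pd i (fun y => f y * g y) x = f x * pd i g x + g x * pd i f x := by
  simp [pd, fderiv_fun_mul hf hg]

lemma pd_congr {n : ℕ} {f g : (Fin n → ℝ) → ℝ} {x : Fin n → ℝ} (i : Fin n)
    (h : f =ᶠ[nhds x] g) : pd i f x = pd i g x := by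
  simp [pd, h.fderiv_eq]

/-- key algebraic step of the noise decomposition theorem.
From `F·∇T₀ = -1`, `F·∇T₁ = -(1/2)Σ A_{ij} ∂²_{ij}T₀` and
`F·∇(V₁ + 2T₀T₁) + (1/2)Σ A_{ij}∂²_{ij}(T₀²) = -2T₁`, it follows that
`F·∇V₁ = -Σ A_{ij} ∂_i T₀ ∂_j T₀`. -/
theorem stmt5 (n : ℕ) (D : Set (Fin n → ℝ)) (hD : IsOpen D)
    (F : (Fin n → ℝ) → Fin n → ℝ)
    (T0 T1 V1 : (Fin n → ℝ) → ℝ)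
    (A : (Fin n → ℝ) → Matrix (Fin n) (Fin n) ℝ)
    (hAsymm : ∀ x ∈ D, (A x)ᵀ = A x)
    (hT0 : ContDiffOn ℝ 2 T0 D) (hT1 : ContDiffOn ℝ 2 T1 D)
    (hV1 : ContDiffOn ℝ 2 V1 D)
    (h1 : ∀ x ∈ D, gradDot F T0 x = -1)
    (h2 : ∀ x ∈ D, gradDot F T1 x = -(1 / 2) * ∑ i, ∑ j, A x i j * pd i (pd j T0) x)
    (h3 : ∀ x ∈ D, gradDot F (fun y => V1 y + 2 * T0 y * T1 y) x
        + (1 / 2) * ∑ i, ∑ j, A x i j * pd i (pd j (fun y => (T0 y) ^ 2)) x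
        = -2 * T1 x) :
    ∀ x ∈ D, gradDot F V1 x = -∑ i, ∑ j, A x i j * (pd i T0 x * pd j T0 x) := by
  -- differentiability of pd j T0 on D
  have hpd : ∀ j : Fin n, ∀ x ∈ D, DifferentiableAt ℝ (pd j T0) x := by
    intro j x hx
    have hfd : ContDiffOn ℝ 1 (fun y => fderiv ℝ T0 y) D :=
      hT0.fderiv_of_isOpen hD (by norm_num)
    have : ContDiffOn ℝ 1 (pd j T0) D := by
      have := hfd.clm_apply (contDiffOn_const (c := Pi.single j (1:ℝ)))
      exact this
    exact ((this.differentiableOn one_ne_zero) x hx).differentiableAt (hD.mem_nhds hx)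
  intro x hx
  have hnx := hD.mem_nhds hx
  have dT0 : ∀ y ∈ D, DifferentiableAt ℝ T0 y := fun y hy =>
    ((hT0.differentiableOn (by norm_num)) y hy).differentiableAt (hD.mem_nhds hy)
  have dT1 : DifferentiableAt ℝ T1 x :=
    ((hT1.differentiableOn (by norm_num)) x hx).differentiableAt hnx
  have dV1 : DifferentiableAt ℝ V1 x :=
    ((hV1.differentiableOn (by norm_num)) x hx).differentiableAt hnx
  -- first-order expansion of pd of T0^2 on D
  have hsq : ∀ j : Fin n, ∀ y ∈ D,
      pd j (fun z => (T0 z) ^ 2) y = 2 * T0 y * pd j T0 y := by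
    intro j y hy
    have : pd j (fun z => (T0 z) ^ 2) y = pd j (fun z => T0 z * T0 z) y := by
      apply pd_congr
      filter_upwards with z using by ring
    rw [this, pd_mul j (dT0 y hy) (dT0 y hy)]; ring
  -- second-order term
  have hsq2 : ∀ i j : Fin n,
      pd i (pd j (fun z => (T0 z) ^ 2)) x
        = 2 * T0 x * pd i (pd j T0) x + 2 * (pd i T0 x * pd j T0 x) := by
    intro i j
    have heq : pd j (fun z => (T0 z) ^ 2) =ᶠ[nhds x] fun y => 2 * T0 y * pd j T0 y := by
      filter_upwards [hnx] with y hy using hsq j y hy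
    rw [pd_congr i heq]
    have : (fun y => 2 * T0 y * pd j T0 y) = fun y => (fun z => 2 * T0 z) y * pd j T0 y := rfl
    rw [this, pd_mul i ((dT0 x hx).const_mul 2) (hpd j x hx)]
    have : pd i (fun z => 2 * T0 z) x = 2 * pd i T0 x := by
      simp [pd, fderiv_const_mul (dT0 x hx) (2:ℝ)]
    rw [this]; ring
  -- expand gradDot of V1 + 2 T0 T1
  have hexp : gradDot F (fun y => V1 y + 2 * T0 y * T1 y) x
      = gradDot F V1 x + 2 * T0 x * gradDot F T1 x + 2 * T1 x * gradDot F T0 x := by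
    unfold gradDot
    have : ∀ i : Fin n, pd i (fun y => V1 y + 2 * T0 y * T1 y) x
        = pd i V1 x + 2 * T0 x * pd i T1 x + 2 * T1 x * pd i T0 x := by
      intro i
      have hm : DifferentiableAt ℝ (fun y => 2 * T0 y * T1 y) x :=
        (((dT0 x hx).const_mul 2).mul dT1)
      rw [pd_add i dV1 hm]
      have : (fun y => 2 * T0 y * T1 y) = fun y => (fun z => 2 * T0 z) y * T1 y := rfl
      rw [this, pd_mul i ((dT0 x hx).const_mul 2) dT1]
      have : pd i (fun z => 2 * T0 z) x = 2 * pd i T0 x := by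
        simp [pd, fderiv_const_mul (dT0 x hx) (2:ℝ)]
      rw [this]; ring
    simp only [this]
    rw [Finset.mul_sum, Finset.mul_sum, ← Finset.sum_add_distrib, ← Finset.sum_add_distrib]
    apply Finset.sum_congr rfl; intro i _; ring
  -- split the second-order sum
  have hsum : ∑ i, ∑ j, A x i j * pd i (pd j (fun y => (T0 y) ^ 2)) x
      = 2 * T0 x * (∑ i, ∑ j, A x i j * pd i (pd j T0) x)
        + 2 * ∑ i, ∑ j, A x i j * (pd i T0 x * pd j T0 x) := by
    rw [Finset.mul_sum, Finset.mul_sum, ← Finset.sum_add_distrib]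
    apply Finset.sum_congr rfl; intro i _
    rw [Finset.mul_sum, Finset.mul_sum, ← Finset.sum_add_distrib]
    apply Finset.sum_congr rfl; intro j _
    rw [hsq2 i j]; ring
  have e1 := h1 x hx
  have e2 := h2 x hx
  have e3 := h3 x hx
  rw [hexp, hsum, e1, e2] at e3
  linarith
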